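/- arXiv:1706.03223 — 3 statements merged into one kernel-verified Lean document; each statement's English description precedes it below -/
import Mathlib

section
/- Let H be a real Hilbert space, f ∈ H, τ > 0, K ⊆ H a nonempty closed convex set, and Φ the support function of K, i.e. Φ(u) = sup_{v ∈ K} ⟨u, v⟩. Then u* minimizes u ↦ (1/(2τ))‖u − f‖² + Φ(u) over H if and only if v* := (f − u*)/τ minimizes v ↦ (1/(2τ))‖τv − f‖² over K. In particular, the unique minimizer u* satisfies u* = f − τ P_K(f/τ), where P_K is the orthogonal projection onto K. -/
open scoped RealInnerProductSpace

/-- Support function `Φ(u) = sup_{v ∈ K} ⟨u, v⟩`. -/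
noncomputable def supportFn {H : Type*} [NormedAddCommGroup H]
    [InnerProductSpace ℝ H] (K : Set H) (u : H) : EReal :=
  ⨆ v ∈ K, ((⟪u, v⟫ : ℝ) : EReal)

/-- Quadratic identity used for the primal problem. -/
lemma quad_id {H : Type*} [NormedAddCommGroup H] [InnerProductSpace ℝ H]
    (f p u : H) (τ : ℝ) (hτ : 0 < τ) :
    1 / (2 * τ) * ‖(f - τ • p) - f‖ ^ 2 + ⟪f - τ • p, p⟫ + 1 / (2 * τ) * ‖u - (f - τ • p)‖ ^ 2
      = 1 / (2 * τ) * ‖u - f‖ ^ 2 + ⟪u, p⟫ := by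
  have h1 : (f - τ • p) - f = -(τ • p) := by abel
  have h2 : u - (f - τ • p) = (u - f) + τ • p := by abel
  rw [h1, h2, norm_neg, @norm_add_sq_real, norm_smul, real_inner_smul_right,
    inner_sub_left, real_inner_smul_left, real_inner_self_eq_norm_sq]
  have h3 : ⟪u, p⟫ = ⟪u - f, p⟫ + ⟪f, p⟫ := by rw [inner_sub_left]; ring
  rw [h3]
  have : |τ| = τ := abs_of_pos hτ
  rw [Real.norm_eq_abs, this]
  field_simp
  ring

/-- The support function evaluated where the sup is attained. -/
lemma support_eq {H : Type*} [NormedAddCommGroup H] [InnerProductSpace ℝ H]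
    (K : Set H) (p u₀ : H) (hp : p ∈ K) (hmax : ∀ v ∈ K, ⟪u₀, v⟫ ≤ ⟪u₀, p⟫) :
    supportFn K u₀ = ((⟪u₀, p⟫ : ℝ) : EReal) := by
  apply le_antisymm
  · exact iSup₂_le fun v hv => EReal.coe_le_coe_iff.mpr (hmax v hv)
  · exact le_iSup₂ (f := fun v (_ : v ∈ K) => ((⟪u₀, v⟫ : ℝ) : EReal)) p hp

/-- Key estimate: if `p` is the projection of `f/τ` onto `K`, then for every `u`,
`F(f - τ•p) + (1/(2τ))‖u - (f - τ•p)‖² ≤ F(u)`, and `F(f - τ•p)` is finite. -/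
lemma key_est {H : Type*} [NormedAddCommGroup H] [InnerProductSpace ℝ H]
    (K : Set H) (f : H) (τ : ℝ) (hτ : 0 < τ) (p : H) (hpK : p ∈ K)
    (hproj : ∀ w ∈ K, ⟪(1 / τ) • f - p, w - p⟫ ≤ 0) :
    (((1 / (2 * τ) * ‖(f - τ • p) - f‖ ^ 2 + ⟪f - τ • p, p⟫ : ℝ)) : EReal)
      = ((1 / (2 * τ) * ‖(f - τ • p) - f‖ ^ 2 : ℝ) : EReal) + supportFn K (f - τ • p) ∧
    ∀ u : H,
      (((1 / (2 * τ) * ‖(f - τ • p) - f‖ ^ 2 + ⟪f - τ • p, p⟫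
          + 1 / (2 * τ) * ‖u - (f - τ • p)‖ ^ 2 : ℝ)) : EReal)
        ≤ ((1 / (2 * τ) * ‖u - f‖ ^ 2 : ℝ) : EReal) + supportFn K u := by
  have hτ' : τ ≠ 0 := ne_of_gt hτ
  have hfp : f - τ • p = τ • ((1 / τ) • f - p) := by
    rw [smul_sub, smul_smul]; field_simp; rw [one_smul]
  have hmax : ∀ v ∈ K, ⟪f - τ • p, v⟫ ≤ ⟪f - τ • p, p⟫ := by
    intro v hv
    have : ⟪f - τ • p, v - p⟫ ≤ 0 := by
      rw [hfp, real_inner_smul_left]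
      exact mul_nonpos_of_nonneg_of_nonpos hτ.le (hproj v hv)
    have h := inner_sub_right (𝕜 := ℝ) (f - τ • p) v p
    linarith [this, h.symm.le, h.le]
  constructor
  · rw [support_eq K p _ hpK hmax, ← EReal.coe_add]
  · intro u
    calc (((1 / (2 * τ) * ‖(f - τ • p) - f‖ ^ 2 + ⟪f - τ • p, p⟫
          + 1 / (2 * τ) * ‖u - (f - τ • p)‖ ^ 2 : ℝ)) : EReal)
        = ((1 / (2 * τ) * ‖u - f‖ ^ 2 + ⟪u, p⟫ : ℝ) : EReal) := by
          rw [quad_id f p u τ hτ]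
      _ = ((1 / (2 * τ) * ‖u - f‖ ^ 2 : ℝ) : EReal) + ((⟪u, p⟫ : ℝ) : EReal) := by
          rw [← EReal.coe_add]
      _ ≤ ((1 / (2 * τ) * ‖u - f‖ ^ 2 : ℝ) : EReal) + supportFn K u := by
          apply add_le_add_right
          exact le_iSup₂ (f := fun v (_ : v ∈ K) => ((⟪u, v⟫ : ℝ) : EReal)) p hpK

/-- From a pointwise distance minimizer to the variational inequality. -/
lemma dist_min_inner {H : Type*} [NormedAddCommGroup H] [InnerProductSpace ℝ H]
    (K : Set H) (hconv : Convex ℝ K) {x p : H} (hpK : p ∈ K)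
    (hmin : ∀ w ∈ K, ‖x - p‖ ≤ ‖x - w‖) :
    ∀ w ∈ K, ⟪x - p, w - p⟫ ≤ 0 := by
  have hne : Nonempty ↥K := ⟨⟨p, hpK⟩⟩
  have : ‖x - p‖ = ⨅ w : K, ‖x - w‖ := by
    apply le_antisymm
    · exact le_ciInf fun w => hmin w w.2
    · exact ciInf_le ⟨0, by rintro _ ⟨w, rfl⟩; positivity⟩ (⟨p, hpK⟩ : K)
  exact (norm_eq_iInf_iff_real_inner_le_zero hconv hpK).mp this

/-- Variational inequality implies distance minimization. -/
lemma inner_dist_min {H : Type*} [NormedAddCommGroup H] [InnerProductSpace ℝ H]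
    {x p w : H} (h : ⟪x - p, w - p⟫ ≤ 0) : ‖x - p‖ ≤ ‖x - w‖ := by
  have key : ‖x - p‖ ^ 2 ≤ ‖x - w‖ ^ 2 := by
    have h1 : x - w = (x - p) - (w - p) := by abel
    have h2 : ‖(x - p) - (w - p)‖ ^ 2
        = ‖x - p‖ ^ 2 - 2 * ⟪x - p, w - p⟫ + ‖w - p‖ ^ 2 := norm_sub_sq_real _ _
    rw [h1, h2]
    nlinarith [sq_nonneg ‖w - p‖]
  nlinarith [norm_nonneg (x - p), norm_nonneg (x - w)]

theorem primal_dual_minimizers {H : Type*} [NormedAddCommGroup H]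
    [InnerProductSpace ℝ H] [CompleteSpace H] (K : Set H)
    (hne : K.Nonempty) (hcl : IsClosed K) (hconv : Convex ℝ K)
    (f : H) (τ : ℝ) (hτ : 0 < τ) :
    -- u* minimizes the primal iff v* = (f - u*)/τ belongs to K and minimizes the dual
    (∀ u : H,
      IsMinOn (fun u : H => ((1 / (2 * τ) * ‖u - f‖ ^ 2 : ℝ) : EReal) + supportFn K u)
        Set.univ u ↔
      ((1 / τ) • (f - u) ∈ K ∧
        IsMinOn (fun v : H => 1 / (2 * τ) * ‖τ • v - f‖ ^ 2) K ((1 / τ) • (f - u)))) ∧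
    -- in particular the unique minimizer is u* = f - τ P_K(f/τ)
    (∀ p : H, p ∈ K → (∀ w ∈ K, ‖(1 / τ) • f - p‖ ≤ ‖(1 / τ) • f - w‖) →
      IsMinOn (fun u : H => ((1 / (2 * τ) * ‖u - f‖ ^ 2 : ℝ) : EReal) + supportFn K u)
        Set.univ (f - τ • p)) := by
  have hτ' : τ ≠ 0 := ne_of_gt hτ
  have hc : (0 : ℝ) < 1 / (2 * τ) := by positivity
  -- scaling identity
  have hscale : ∀ z : H, ‖τ • z - f‖ = τ * ‖(1 / τ) • f - z‖ := by
    intro z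
    have h1 : τ • ((1 / τ) • f - z) = -(τ • z - f) := by
      rw [smul_sub, smul_smul]
      field_simp
      rw [one_smul, neg_sub]
    rw [← norm_neg (τ • z - f), ← h1, norm_smul, Real.norm_eq_abs, abs_of_pos hτ]
  -- main sufficiency: projection property implies primal minimality
  have main : ∀ p : H, p ∈ K → (∀ w ∈ K, ⟪(1 / τ) • f - p, w - p⟫ ≤ 0) →
      IsMinOn (fun u : H => ((1 / (2 * τ) * ‖u - f‖ ^ 2 : ℝ) : EReal) + supportFn K u)
        Set.univ (f - τ • p) := by
    intro p hpK hproj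
    obtain ⟨heq, hle⟩ := key_est K f τ hτ p hpK hproj
    rw [isMinOn_iff]
    intro u _
    calc ((1 / (2 * τ) * ‖(f - τ • p) - f‖ ^ 2 : ℝ) : EReal) + supportFn K (f - τ • p)
        = ((1 / (2 * τ) * ‖(f - τ • p) - f‖ ^ 2 + ⟪f - τ • p, p⟫ : ℝ) : EReal) := heq.symm
      _ ≤ ((1 / (2 * τ) * ‖(f - τ • p) - f‖ ^ 2 + ⟪f - τ • p, p⟫
            + 1 / (2 * τ) * ‖u - (f - τ • p)‖ ^ 2 : ℝ) : EReal) := by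
          apply EReal.coe_le_coe_iff.mpr
          nlinarith [sq_nonneg ‖u - (f - τ • p)‖]
      _ ≤ ((1 / (2 * τ) * ‖u - f‖ ^ 2 : ℝ) : EReal) + supportFn K u := hle u
  constructor
  · intro u
    constructor
    · -- forward: primal minimizer gives dual minimizer
      intro hmin
      obtain ⟨p, hpK, hpdist⟩ :=
        exists_norm_eq_iInf_of_complete_convex hne hcl.isComplete hconv ((1 / τ) • f)
      have hproj : ∀ w ∈ K, ⟪(1 / τ) • f - p, w - p⟫ ≤ 0 :=
        (norm_eq_iInf_iff_real_inner_le_zero hconv hpK).mp hpdist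
      obtain ⟨heq, hle⟩ := key_est K f τ hτ p hpK hproj
      have h1 : ((1 / (2 * τ) * ‖u - f‖ ^ 2 : ℝ) : EReal) + supportFn K u
          ≤ ((1 / (2 * τ) * ‖(f - τ • p) - f‖ ^ 2 : ℝ) : EReal) + supportFn K (f - τ • p) :=
        hmin (Set.mem_univ (f - τ • p))
      have h2 := (hle u).trans (h1.trans heq.symm.le)
      have h3 := EReal.coe_le_coe_iff.mp h2
      have h4 : ‖u - (f - τ • p)‖ ^ 2 ≤ 0 := by
        by_contra hpos
        push_neg at hpos
        nlinarith [mul_pos hc hpos]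
      have h5 : ‖u - (f - τ • p)‖ ^ 2 = 0 := le_antisymm h4 (sq_nonneg _)
      have hnorm : ‖u - (f - τ • p)‖ = 0 := pow_eq_zero_iff two_ne_zero |>.mp h5
      have hu0 : u = f - τ • p := by
        have := norm_eq_zero.mp hnorm
        rw [sub_eq_zero] at this
        exact this
      have hv : (1 / τ) • (f - u) = p := by
        rw [hu0]
        have : f - (f - τ • p) = τ • p := by abel
        rw [this, smul_smul]
        field_simp
        rw [one_smul]
      rw [hv]
      refine ⟨hpK, ?_⟩
      rw [isMinOn_iff]
      intro w hw
      have hd : ‖(1 / τ) • f - p‖ ≤ ‖(1 / τ) • f - w‖ := inner_dist_min (hproj w hw)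
      rw [hscale p, hscale w]
      have h2 : (τ * ‖(1 / τ) • f - p‖) ^ 2 ≤ (τ * ‖(1 / τ) • f - w‖) ^ 2 :=
        pow_le_pow_left₀ (by positivity) (mul_le_mul_of_nonneg_left hd hτ.le) 2
      exact mul_le_mul_of_nonneg_left h2 hc.le
    · -- backward: dual minimizer gives primal minimizer
      rintro ⟨hvK, hvmin⟩
      set v := (1 / τ) • (f - u) with hv
      have hdist : ∀ w ∈ K, ‖(1 / τ) • f - v‖ ≤ ‖(1 / τ) • f - w‖ := by
        intro w hw
        have := isMinOn_iff.mp hvmin w hw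
        rw [hscale v, hscale w] at this
        have h1 : (τ * ‖(1 / τ) • f - v‖) ^ 2 ≤ (τ * ‖(1 / τ) • f - w‖) ^ 2 :=
          (mul_le_mul_iff_right₀ hc).mp this
        have h2 : τ * ‖(1 / τ) • f - v‖ ≤ τ * ‖(1 / τ) • f - w‖ :=
          (pow_le_pow_iff_left₀ (by positivity) (by positivity) two_ne_zero).mp h1
        exact (mul_le_mul_iff_right₀ hτ).mp h2
      have hproj := dist_min_inner K hconv hvK hdist
      have hu : f - τ • v = u := by
        rw [hv, smul_smul]
        field_simp
        rw [one_smul, sub_sub_cancel]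
      have := main v hvK hproj
      rwa [hu] at this
  · -- second claim
    intro p hpK hdist
    exact main p hpK (dist_min_inner K hconv hpK hdist)
end

section
/- Let H be a real Hilbert space, K ⊆ H a nonempty closed convex set, f ∈ H, and τ, λ > 0 with 0 < λτ < 2. Define J(v) = (1/(2τ))‖τv − f‖² for v ∈ K. For v^k, v^{k+1} ∈ K produced by the iteration v^{k+1} = P_K(v^k + λ(f − τ v^k)) (projection onto K), the descent estimate J(v^{k+1}) − J(v^k) ≤ (τ/2 − 1/λ)‖v^{k+1} − v^k‖² holds; in particular J(v^{k+1}) ≤ J(v^k), with strict inequality unless v^{k+1} = v^k. -/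
open scoped RealInnerProductSpace

theorem descent_estimate {H : Type*} [NormedAddCommGroup H]
    [InnerProductSpace ℝ H] [CompleteSpace H] (K : Set H)
    (hne : K.Nonempty) (hcl : IsClosed K) (hconv : Convex ℝ K)
    (f : H) (τ lam : ℝ) (hτ : 0 < τ) (hlam : 0 < lam) (hlt : lam * τ < 2)
    (vk vk1 : H) (hvk : vk ∈ K) (hvk1 : vk1 ∈ K)
    -- vk1 = P_K(vk + lam (f - τ vk)) via the variational characterization
    (hproj : ∀ w ∈ K, ⟪vk + lam • (f - τ • vk) - vk1, w - vk1⟫ ≤ (0 : ℝ)) :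
    1 / (2 * τ) * ‖τ • vk1 - f‖ ^ 2 - 1 / (2 * τ) * ‖τ • vk - f‖ ^ 2 ≤
      (τ / 2 - 1 / lam) * ‖vk1 - vk‖ ^ 2 ∧
    1 / (2 * τ) * ‖τ • vk1 - f‖ ^ 2 ≤ 1 / (2 * τ) * ‖τ • vk - f‖ ^ 2 ∧
    (vk1 ≠ vk →
      1 / (2 * τ) * ‖τ • vk1 - f‖ ^ 2 < 1 / (2 * τ) * ‖τ • vk - f‖ ^ 2) := by
  have h1 := hproj vk hvk
  have e1 : ‖τ • vk1 - f‖ ^ 2 = ⟪τ • vk1 - f, τ • vk1 - f⟫ :=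
    (real_inner_self_eq_norm_sq _).symm
  have e2 : ‖τ • vk - f‖ ^ 2 = ⟪τ • vk - f, τ • vk - f⟫ :=
    (real_inner_self_eq_norm_sq _).symm
  have e3 : ‖vk1 - vk‖ ^ 2 = ⟪vk1 - vk, vk1 - vk⟫ :=
    (real_inner_self_eq_norm_sq _).symm
  simp only [inner_add_left, inner_sub_left, inner_sub_right, real_inner_smul_left,
    real_inner_smul_right] at h1 e1 e2 e3 ⊢
  have c1 := real_inner_comm vk vk1
  have c2 := real_inner_comm f vk
  have c3 := real_inner_comm f vk1
  have hτ' : (0 : ℝ) < 2 * τ := by linarith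
  have hsq : (0 : ℝ) ≤ ⟪vk1 - vk, vk1 - vk⟫ := real_inner_self_nonneg
  simp only [inner_sub_left, inner_sub_right] at hsq
  have hmain : 1 / (2 * τ) * ‖τ • vk1 - f‖ ^ 2 - 1 / (2 * τ) * ‖τ • vk - f‖ ^ 2 ≤
      (τ / 2 - 1 / lam) * ‖vk1 - vk‖ ^ 2 := by
    rw [e1, e2, e3, ← sub_nonneg]
    have hτ0 : τ ≠ 0 := hτ.ne'
    have hl0 : lam ≠ 0 := hlam.ne'
    field_simp
    simp only [c1, c2, c3] at h1 ⊢
    nlinarith [mul_le_mul_of_nonneg_left h1 (by positivity : (0:ℝ) ≤ 4 * τ)]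
  refine ⟨hmain, ?_, ?_⟩
  · have hcoef : τ / 2 - 1 / lam ≤ 0 := by
      rw [sub_nonpos, div_le_div_iff₀ (by norm_num) hlam]
      nlinarith
    nlinarith [sq_nonneg ‖vk1 - vk‖, hmain]
  · intro hne'
    have hpos : 0 < ‖vk1 - vk‖ ^ 2 := by
      exact pow_pos (norm_pos_iff.mpr (sub_ne_zero.mpr hne')) 2
    have hcoef : τ / 2 - 1 / lam < 0 := by
      rw [sub_neg, div_lt_div_iff₀ (by norm_num) hlam]
      nlinarith
    nlinarith [hmain, mul_pos (neg_pos.mpr hcoef) hpos]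
end

section
/- Let H be a real Hilbert space, K ⊆ H a nonempty closed convex set, f ∈ H, τ, λ > 0 with 0 < λτ < 2. Define the iteration v^{k+1} = P_K(v^k + λ(f − τ v^k)), starting from v^0 ∈ K. Then ‖v^{k+1} − v^k‖ → 0 as k → ∞. -/
open scoped RealInnerProductSpace

theorem successive_differences_tendsto_zero {H : Type*} [NormedAddCommGroup H]
    [InnerProductSpace ℝ H] [CompleteSpace H] (K : Set H)
    (hne : K.Nonempty) (hcl : IsClosed K) (hconv : Convex ℝ K)
    (f : H) (τ lam : ℝ) (hτ : 0 < τ) (hlam : 0 < lam) (hlt : lam * τ < 2)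
    (v : ℕ → H) (hv0 : v 0 ∈ K)
    (hmem : ∀ k, v (k + 1) ∈ K)
    -- v^{k+1} = P_K(v^k + lam (f - τ v^k)) via the variational characterization
    (hproj : ∀ k, ∀ w ∈ K,
      ⟪v k + lam • (f - τ • v k) - v (k + 1), w - v (k + 1)⟫ ≤ (0 : ℝ)) :
    Filter.Tendsto (fun k => ‖v (k + 1) - v k‖) Filter.atTop (nhds 0) := by
  set J : H → ℝ := fun x => (τ / 2) * ‖x‖ ^ 2 - ⟪f, x⟫ with hJ
  have hvK : ∀ k, v k ∈ K := by
    intro k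
    cases k with
    | zero => exact hv0
    | succ n => exact hmem n
  have hc : 0 < 1 / lam - τ / 2 := by
    rw [sub_pos, div_lt_div_iff₀ (by norm_num) hlam]
    linarith [hlt]
  -- key inequality
  have key : ∀ k, (1 / lam - τ / 2) * ‖v (k + 1) - v k‖ ^ 2 ≤ J (v k) - J (v (k + 1)) := by
    intro k
    have h1 := hproj k (v k) (hvK k)
    set a := v k
    set b := v (k + 1)
    have hinner : ⟪a + lam • (f - τ • a) - b, a - b⟫ =
        ‖a - b‖ ^ 2 + lam * (⟪f, a - b⟫ - τ * ⟪a, a - b⟫) := by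
      rw [← real_inner_self_eq_norm_sq]
      simp only [inner_sub_left, inner_add_left, inner_sub_right, real_inner_smul_left,
        real_inner_smul_right]
      rw [real_inner_comm b a]
      ring
    rw [hinner] at h1
    -- so lam * (⟪f, a - b⟫ - τ * ⟪a, a - b⟫) ≤ -‖a-b‖^2
    have h2 : ⟪f, b - a⟫ - τ * ⟪a, b - a⟫ ≥ (1 / lam) * ‖b - a‖ ^ 2 := by
      have hab : ⟪f, b - a⟫ = -⟪f, a - b⟫ := by
        rw [← neg_sub a b, inner_neg_right]
      have hab2 : ⟪a, b - a⟫ = -⟪a, a - b⟫ := by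
        rw [← neg_sub a b, inner_neg_right]
      have hn : ‖b - a‖ = ‖a - b‖ := by rw [norm_sub_rev]
      rw [hab, hab2, hn]
      rw [ge_iff_le, div_mul_eq_mul_div, div_le_iff₀ hlam]
      nlinarith [h1]
    -- expand J a - J b
    have hJab : J a - J b = ⟪f, b - a⟫ - τ * ⟪a, b - a⟫ - (τ / 2) * ‖b - a‖ ^ 2 := by
      simp only [hJ]
      have hb : b = a + (b - a) := by abel
      have hnb : ‖b‖ ^ 2 = ‖a‖ ^ 2 + 2 * ⟪a, b - a⟫ + ‖b - a‖ ^ 2 := by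
        conv_lhs => rw [hb]
        rw [norm_add_sq_real]
      have hfb : ⟪f, b⟫ = ⟪f, a⟫ + ⟪f, b - a⟫ := by
        conv_lhs => rw [hb]
        rw [inner_add_right]
      rw [hnb, hfb]; ring
    rw [hJab]
    nlinarith [h2, sq_nonneg ‖b - a‖]
  -- J (v k) is antitone and bounded below
  have hanti : Antitone (fun k => J (v k)) := by
    apply antitone_nat_of_succ_le
    intro k
    show J (v (k + 1)) ≤ J (v k)
    have h := key k
    have h2 := mul_nonneg hc.le (sq_nonneg ‖v (k + 1) - v k‖)
    have h3 : (0:ℝ) ≤ J (v k) - J (v (k + 1)) := le_trans h2 h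
    linarith [h3]
  have hbdd : BddBelow (Set.range fun k => J (v k)) := by
    refine ⟨-(‖f‖ ^ 2 / (2 * τ)), ?_⟩
    rintro x ⟨k, rfl⟩
    simp only [hJ]
    have h := sq_nonneg ‖v k - (1 / τ) • f‖
    rw [norm_sub_sq_real, real_inner_smul_right, norm_smul, mul_pow,
      Real.norm_eq_abs, sq_abs] at h
    have hτ' : τ ≠ 0 := ne_of_gt hτ
    have : (0:ℝ) ≤ ‖v k‖ ^ 2 - 2 * (1/τ * ⟪v k, f⟫) + (1/τ)^2 * ‖f‖^2 := h
    rw [real_inner_comm]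
    have := mul_le_mul_of_nonneg_left this (le_of_lt (by positivity : (0:ℝ) < τ/2))
    rw [mul_zero] at this
    have hexp : τ / 2 * (‖v k‖ ^ 2 - 2 * (1 / τ * ⟪v k, f⟫) + (1 / τ) ^ 2 * ‖f‖ ^ 2)
        = τ / 2 * ‖v k‖ ^ 2 - ⟪v k, f⟫ + ‖f‖ ^ 2 / (2 * τ) := by
      field_simp
    rw [hexp] at this
    linarith
  -- convergence of J (v k)
  have hconv' : ∃ L, Filter.Tendsto (fun k => J (v k)) Filter.atTop (nhds L) :=
    ⟨_, tendsto_atTop_ciInf hanti hbdd⟩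
  obtain ⟨L, hL⟩ := hconv'
  have hshift : Filter.Tendsto (fun k => J (v (k + 1))) Filter.atTop (nhds L) :=
    hL.comp (Filter.tendsto_add_atTop_nat 1)
  have hdiff : Filter.Tendsto (fun k => J (v k) - J (v (k + 1))) Filter.atTop (nhds 0) := by
    have := hL.sub hshift
    simpa using this
  -- squeeze for the squared norms
  have hsq : Filter.Tendsto (fun k => ‖v (k + 1) - v k‖ ^ 2) Filter.atTop (nhds 0) := by
    have hdiv : Filter.Tendsto (fun k => (J (v k) - J (v (k + 1))) / (1 / lam - τ / 2))
        Filter.atTop (nhds 0) := by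
      have := hdiff.div_const (1 / lam - τ / 2)
      simpa using this
    apply squeeze_zero (fun n => sq_nonneg _) _ hdiv
    intro n
    rw [le_div_iff₀ hc]
    have := key n
    linarith [this]
  have : Filter.Tendsto (fun k => Real.sqrt (‖v (k + 1) - v k‖ ^ 2)) Filter.atTop (nhds 0) := by
    have hs : Filter.Tendsto Real.sqrt (nhds 0) (nhds 0) := by
      simpa using (Real.continuous_sqrt.tendsto 0)
    exact hs.comp hsq
  simpa [Real.sqrt_sq_eq_abs, abs_of_nonneg (norm_nonneg _)] using this
end
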